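/- Let s, t be positive real numbers with s + t > 1, s ≠ 1, t ≠ 1, let α(u) = s²(s-1)²u² - 2st(st + s + t - 1)u + t²(t-1)², and let u be a real number with α(u) < 0. Define x₀ = st((2st + s² - s)u + (t² - t))/(2st(st + s + t - 1)u - s²(s-1)²u² - t²(t-1)²) and y₀ = st((2st + t² - t)u + (s² - s)u²)/(2st(st + s + t - 1)u - s²(s-1)²u² - t²(t-1)²). Then (x₀, y₀) does not lie on the open line segment joining (1/2, 1/2) and (s/2, t/2); more precisely, if y₀ = (s - t + 2x₀(t - 1))/(2(s - 1)) then x₀ = 1/2 or x₀ = s/2. -/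

import Mathlib

theorem circumscribed_center_not_on_inscribed_locus (s t : ℝ) (hs : 0 < s) (ht : 0 < t)
    (hst : s + t > 1) (hs1 : s ≠ 1) (ht1 : t ≠ 1)
    (u : ℝ)
    (hu : s^2*(s-1)^2*u^2 - 2*s*t*(s*t + s + t - 1)*u + t^2*(t-1)^2 < 0)
    (x₀ y₀ : ℝ)
    (hx₀ : x₀ = s*t*((2*s*t + s^2 - s)*u + (t^2 - t)) /
      (2*s*t*(s*t + s + t - 1)*u - s^2*(s-1)^2*u^2 - t^2*(t-1)^2))
    (hy₀ : y₀ = s*t*((2*s*t + t^2 - t)*u + (s^2 - s)*u^2) /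
      (2*s*t*(s*t + s + t - 1)*u - s^2*(s-1)^2*u^2 - t^2*(t-1)^2)) :
    (x₀, y₀) ∉ openSegment ℝ ((1/2 : ℝ), (1/2 : ℝ)) (s/2, t/2) ∧
    (y₀ = (s - t + 2*x₀*(t - 1)) / (2*(s - 1)) → x₀ = 1/2 ∨ x₀ = s/2) := by
  have hD : (0:ℝ) < 2*s*t*(s*t + s + t - 1)*u - s^2*(s-1)^2*u^2 - t^2*(t-1)^2 := by linarith
  have hDne : (2*s*t*(s*t + s + t - 1)*u - s^2*(s-1)^2*u^2 - t^2*(t-1)^2) ≠ 0 := ne_of_gt hD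
  have hs1' : s - 1 ≠ 0 := sub_ne_zero.mpr hs1
  have key : y₀ = (s - t + 2*x₀*(t - 1)) / (2*(s - 1)) → x₀ = 1/2 ∨ x₀ = s/2 := by
    intro hline
    rw [eq_div_iff (mul_ne_zero two_ne_zero hs1')] at hline
    have hxD : x₀ * (2*s*t*(s*t + s + t - 1)*u - s^2*(s-1)^2*u^2 - t^2*(t-1)^2) = s*t*((2*s*t + s^2 - s)*u + (t^2 - t)) := by
      rw [hx₀]; exact div_mul_cancel₀ _ hDne
    have hyD : y₀ * (2*s*t*(s*t + s + t - 1)*u - s^2*(s-1)^2*u^2 - t^2*(t-1)^2) = s*t*((2*s*t + t^2 - t)*u + (s^2 - s)*u^2) := by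
      rw [hy₀]; exact div_mul_cancel₀ _ hDne
    have h2 : (2*s*t*(s*t + s + t - 1)*u - s^2*(s-1)^2*u^2 - t^2*(t-1)^2) *
        ((s+t)*(s*(s-1)*u - t*(t-1))*(s*(s-1)*u + t*(t-1))) = 0 := by
      linear_combination (2*s*t*(s*t + s + t - 1)*u - s^2*(s-1)^2*u^2 - t^2*(t-1)^2) * ((2*s*t*(s*t + s + t - 1)*u - s^2*(s-1)^2*u^2 - t^2*(t-1)^2) * hline - 2*(s-1)*hyD + 2*(t-1)*hxD)
    have hfac : (s+t)*(s*(s-1)*u - t*(t-1))*(s*(s-1)*u + t*(t-1)) = 0 :=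
      (mul_eq_zero.mp h2).resolve_left hDne
    rcases mul_eq_zero.mp hfac with h | hplus
    · rcases mul_eq_zero.mp h with h0 | hminus
      · exfalso; nlinarith
      · right
        rw [hx₀, div_eq_div_iff hDne (two_ne_zero)]
        linear_combination s*(s*(s-1)*u - t*(t+1)) * hminus
    · left
      rw [hx₀, div_eq_div_iff hDne (two_ne_zero)]
      linear_combination (s*(s-1)*u + t*(2*s+t-1)) * hplus
  refine ⟨?_, key⟩
  intro hmem
  obtain ⟨a, b, ha, hb, hab, heq⟩ := hmem
  simp only [Prod.smul_mk, smul_eq_mul, Prod.mk_add_mk, Prod.mk.injEq] at heq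
  obtain ⟨hx, hy⟩ := heq
  have hline : y₀ = (s - t + 2*x₀*(t - 1)) / (2*(s - 1)) := by
    rw [eq_div_iff (by intro h; apply hs1'; linarith)]
    linear_combination (-2*(s-1))*hy + (2*(t-1))*hx + (s-t)*hab
  rcases key hline with h12 | hs2
  · have hb0 : b * (s - 1) = 0 := by linear_combination 2*hx - hab + 2*h12
    rcases mul_eq_zero.mp hb0 with h | h
    · linarith
    · exact hs1' h
  · have ha0 : a * (s - 1) = 0 := by linear_combination -2*hx + s*hab - 2*hs2
    rcases mul_eq_zero.mp ha0 with h | h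
    · linarith
    · exact hs1' h
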